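/- Fix an integer d ≥ 3, and let T be an order-d symmetric tensor on ℝ² with T_{1,…,1} ≠ 0 and T_{2,…,2} ≠ 0. Then there exist a unique real number a and a unique order-d symmetric tensor D with D_{1,…,1,2} = 0 (d−1 ones and one 2) such that T = L_a•D, where L_a is the lower unitriangular matrix with rows (1, 0) and (a, 1); and there also exist a unique real number b and a unique order-d symmetric tensor D' with D'_{2,…,2,1} = 0 (d−1 twos and one 1) such that T = U_b•D', where U_b is the upper unitriangular matrix with rows (1, b) and (0, 1). -/

import Mathlib

open Matrix

/-- A tensor is symmetric if it is invariant under all permutations of its indices. -/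
def IsSymTensor {p d : ℕ} (T : (Fin d → Fin p) → ℝ) : Prop :=
  ∀ (σ : Equiv.Perm (Fin d)) (i : Fin d → Fin p), T (i ∘ σ) = T i

/-- The action of a matrix on an order-`d` tensor:
`(A•T)_{i₁,…,i_d} = Σ_{j₁,…,j_d} A_{i₁j₁}⋯A_{i_dj_d}·T_{j₁,…,j_d}`. -/
noncomputable def tensorAct {p d : ℕ} (A : Matrix (Fin p) (Fin p) ℝ)
    (T : (Fin d → Fin p) → ℝ) : (Fin d → Fin p) → ℝ :=
  fun i => ∑ j : Fin d → Fin p, (∏ t, A (i t) (j t)) * T j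

lemma tensorAct_one {p d : ℕ} (T : (Fin d → Fin p) → ℝ) : tensorAct 1 T = T := by
  funext i
  unfold tensorAct
  rw [Finset.sum_eq_single i]
  · simp [Matrix.one_apply]
  · intro j _ hj
    have : ∃ t, i t ≠ j t := by
      by_contra h; push_neg at h; exact hj (funext fun t => (h t).symm)
    obtain ⟨t, ht⟩ := this
    rw [Finset.prod_eq_zero (Finset.mem_univ t) (by simp [Matrix.one_apply, ht]), zero_mul]
  · simp

lemma tensorAct_mul {p d : ℕ} (A B : Matrix (Fin p) (Fin p) ℝ) (T : (Fin d → Fin p) → ℝ) :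
    tensorAct (A * B) T = tensorAct A (tensorAct B T) := by
  funext i
  unfold tensorAct
  simp only [Matrix.mul_apply]
  have key : ∀ j : Fin d → Fin p, (∏ t, ∑ k, A (i t) k * B k (j t))
      = ∑ k : Fin d → Fin p, ∏ t, A (i t) (k t) * B (k t) (j t) := by
    intro j
    rw [Finset.prod_univ_sum, Fintype.piFinset_univ]
  simp only [key, Finset.sum_mul, Finset.mul_sum, Finset.prod_mul_distrib]
  rw [Finset.sum_comm]
  exact Finset.sum_congr rfl fun k _ => Finset.sum_congr rfl fun j _ => by ring

lemma tensorAct_isSym {p d : ℕ} (A : Matrix (Fin p) (Fin p) ℝ) {T : (Fin d → Fin p) → ℝ}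
    (hT : IsSymTensor T) : IsSymTensor (tensorAct A T) := by
  intro σ i
  unfold tensorAct
  refine Fintype.sum_equiv (Equiv.arrowCongr σ (Equiv.refl (Fin p))) _ _ fun j => ?_
  simp only [Equiv.arrowCongr_apply, Equiv.coe_refl, Function.comp, id]
  congr 1
  · rw [← Equiv.prod_comp σ fun t => A (i t) (j (σ.symm t))]
    exact Finset.prod_congr rfl fun t _ => by rw [Equiv.symm_apply_apply]
  · have e : ((Equiv.arrowCongr σ (Equiv.refl (Fin p))) j) = fun t => j (σ.symm t) := by
      funext t; simp [Equiv.arrowCongr]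
    have h := hT σ fun t => j (σ.symm t)
    rw [e, ← h]
    congr 1
    funext t
    simp [Function.comp]

lemma fin2_resolve {c c' k : Fin 2} (h : c ≠ c') (hk : k ≠ c) : k = c' := by
  fin_cases c <;> fin_cases c' <;> fin_cases k <;> simp_all

lemma act_diag {d : ℕ} (A : Matrix (Fin 2) (Fin 2) ℝ) (c c' : Fin 2) (hne : c ≠ c')
    (h0 : A c c' = 0) (hcc : A c c = 1) (T : (Fin d → Fin 2) → ℝ) :
    tensorAct A T (fun _ => c) = T (fun _ => c) := by
  unfold tensorAct
  rw [Finset.sum_eq_single (fun _ => c)]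
  · simp [hcc]
  · intro j _ hj
    have : ∃ t, j t ≠ c := by
      by_contra h; push_neg at h
      exact hj (funext h)
    obtain ⟨t, ht⟩ := this
    rw [Finset.prod_eq_zero (Finset.mem_univ t) (by rw [fin2_resolve hne ht]; exact h0),
      zero_mul]
  · simp

lemma act_off {d : ℕ} (A : Matrix (Fin 2) (Fin 2) ℝ) (c c' : Fin 2) (hne : c ≠ c')
    (h0 : A c c' = 0) (hcc : A c c = 1) (hc'c' : A c' c' = 1)
    (p : Fin d) (T : (Fin d → Fin 2) → ℝ) :
    tensorAct A T (Function.update (fun _ => c) p c')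
      = A c' c * T (fun _ => c) + T (Function.update (fun _ => c) p c') := by
  unfold tensorAct
  have hne' : (fun _ => c : Fin d → Fin 2) ≠ Function.update (fun _ => c) p c' := by
    intro h
    have := congrFun h p
    simp [Function.update_self] at this
    exact hne this
  rw [Finset.sum_eq_add (fun _ => c) (Function.update (fun _ => c) p c') hne' ?h0 (by simp) (by simp)]
  · congr 1
    · congr 1
      rw [Finset.prod_eq_single p]
      · simp [Function.update_self]
      · intro t _ htp
        simp [Function.update_of_ne htp, hcc]
      · simp
    · rw [Finset.prod_eq_one, one_mul]
      intro t _
      by_cases htp : t = p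
      · subst htp; simp [Function.update_self, hc'c']
      · simp [Function.update_of_ne htp, hcc]
  case h0 =>
    intro j _ ⟨hj0, hj1⟩
    have : ∃ t, t ≠ p ∧ j t ≠ c := by
      by_contra h; push_neg at h
      by_cases hjp : j p = c
      · exact hj0 (by
          funext t
          by_cases htp : t = p
          · subst htp; exact hjp
          · exact h t htp)
      · refine hj1 ?_
        funext t
        by_cases htp : t = p
        · subst htp; simp [Function.update_self, fin2_resolve hne hjp]
        · simp [Function.update_of_ne htp, h t htp]
    obtain ⟨t, htp, hjt⟩ := this
    have : A (Function.update (fun _ => c) p c' t) (j t) = 0 := by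
      rw [Function.update_of_ne htp, fin2_resolve hne hjt]; exact h0
    rw [Finset.prod_eq_zero (Finset.mem_univ t) this, zero_mul]

lemma decomp {d : ℕ} (p : Fin d) (c c' : Fin 2) (hne : c ≠ c')
    (L : ℝ → Matrix (Fin 2) (Fin 2) ℝ)
    (hcc : ∀ x, L x c c = 1) (h0 : ∀ x, L x c c' = 0)
    (hc'c' : ∀ x, L x c' c' = 1) (hc'c : ∀ x, L x c' c = x)
    (hmul : ∀ x y, L x * L y = L (x + y)) (hz : L 0 = 1)
    (T : (Fin d → Fin 2) → ℝ) (hT : IsSymTensor T) (hT0 : T (fun _ => c) ≠ 0) :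
    ∃! aD : ℝ × ((Fin d → Fin 2) → ℝ),
      IsSymTensor aD.2 ∧
      aD.2 (Function.update (fun _ => c) p c') = 0 ∧
      T = tensorAct (L aD.1) aD.2 := by
  set a := T (Function.update (fun _ => c) p c') / T (fun _ => c) with ha
  refine ⟨(a, tensorAct (L (-a)) T), ⟨tensorAct_isSym _ hT, ?_, ?_⟩, ?_⟩
  · show tensorAct (L (-a)) T (Function.update (fun _ => c) p c') = 0
    rw [act_off (L (-a)) c c' hne (h0 _) (hcc _) (hc'c' _) p, hc'c, ha]
    field_simp
    ring
  · show T = tensorAct (L a) (tensorAct (L (-a)) T)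
    rw [← tensorAct_mul, hmul, add_neg_cancel, hz, tensorAct_one]
  · rintro ⟨b, D⟩ ⟨hDs, hD0, hTD⟩
    have e0 : T (fun _ => c) = D (fun _ => c) := by
      rw [hTD]; exact act_diag _ c c' hne (h0 _) (hcc _) D
    have e1 : T (Function.update (fun _ => c) p c') = b * D (fun _ => c) := by
      rw [hTD, act_off _ c c' hne (h0 _) (hcc _) (hc'c' _) p, hc'c, hD0, add_zero]
    have hDc : D (fun _ => c) ≠ 0 := e0 ▸ hT0
    have hb : b = a := by
      rw [ha, e1, e0, mul_div_assoc, div_self hDc, mul_one]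
    have hD : D = tensorAct (L (-b)) T := by
      rw [hTD, ← tensorAct_mul, hmul, neg_add_cancel, hz, tensorAct_one]
    simp only [Prod.mk.injEq]
    exact ⟨hb, by rw [hD, hb]⟩

/-- Two-variable non-identifiability from a single higher-order tensor: a symmetric
order-`d` tensor on `ℝ²` with nonzero extreme diagonal entries admits a unique
lower-unitriangular decomposition `T = L_a•D` with `D_{1,…,1,2} = 0` (order `1 < 2`)
and also a unique upper-unitriangular decomposition `T = U_b•D'` with `D'_{2,…,2,1} = 0`
(reversed order `2 < 1`). -/
theorem stmt_17 (d : ℕ) (hd : 3 ≤ d)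
    (T : (Fin d → Fin 2) → ℝ) (hT : IsSymTensor T)
    (h1 : T (fun _ => 0) ≠ 0) (h2 : T (fun _ => 1) ≠ 0) :
    (∃! aD : ℝ × ((Fin d → Fin 2) → ℝ),
      IsSymTensor aD.2 ∧
      aD.2 (Function.update (fun _ => (0 : Fin 2)) ⟨d - 1, by omega⟩ 1) = 0 ∧
      T = tensorAct !![1, 0; aD.1, 1] aD.2) ∧
    (∃! bD : ℝ × ((Fin d → Fin 2) → ℝ),
      IsSymTensor bD.2 ∧
      bD.2 (Function.update (fun _ => (1 : Fin 2)) ⟨d - 1, by omega⟩ 0) = 0 ∧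
      T = tensorAct !![1, bD.1; 0, 1] bD.2) := by
  constructor
  · exact decomp ⟨d - 1, by omega⟩ 0 1 (by decide) (fun x => !![1, 0; x, 1])
      (fun x => by simp) (fun x => by simp) (fun x => by simp) (fun x => by simp)
      (fun x y => by rw [Matrix.mul_fin_two]; norm_num [add_comm])
      (by rw [Matrix.one_fin_two]) T hT h1
  · exact decomp ⟨d - 1, by omega⟩ 1 0 (by decide) (fun x => !![1, x; 0, 1])
      (fun x => by simp) (fun x => by simp) (fun x => by simp) (fun x => by simp)
      (fun x y => by rw [Matrix.mul_fin_two]; norm_num [add_comm])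
      (by rw [Matrix.one_fin_two]) T hT h2
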